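/- Let r ≥ 1, let F be a field, and let ζ ∈ F be a primitive 5^{r+1}-th root of unity. Let d be an integer with d ≡ 2 (mod 5) and d² ≡ −1 (mod 5^{r+1}). Then the six points of ℙ²(F) with coordinate triples (ζ²,ζ,1), (ζ^{2d},ζ^{d},1), (ζ^{−2},ζ^{−1},1), (ζ^{−2d},ζ^{−d},1), (1,0,0), (0,1,0) are in general position. -/

import Mathlib

/-- Six points of the projective plane given by coordinate triples are *in general position* if:
they are pairwise distinct as projective points (no two triples are proportional), no three of
them lie on a line (no nonzero linear form vanishes at three of the triples), and the six do not
all lie on a conic (no nonzero quadratic form vanishes at all six triples). -/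
def InGeneralPosition6 {k : Type*} [Field k] (P : Fin 6 → Fin 3 → k) : Prop :=
  (∀ i j : Fin 6, i ≠ j → ¬∃ c : k, c ≠ 0 ∧ P j = c • P i) ∧
  (∀ i j l : Fin 6, i ≠ j → i ≠ l → j ≠ l →
    ¬∃ α β γ : k, (α, β, γ) ≠ (0, 0, 0) ∧
      ∀ m ∈ ({i, j, l} : Set (Fin 6)), α * P m 0 + β * P m 1 + γ * P m 2 = 0) ∧
  ¬∃ a b c d e f : k, (a, b, c, d, e, f) ≠ (0, 0, 0, 0, 0, 0) ∧
    ∀ m : Fin 6,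
      a * P m 0 ^ 2 + b * P m 1 ^ 2 + c * P m 2 ^ 2 +
        d * (P m 0 * P m 1) + e * (P m 0 * P m 2) + f * (P m 1 * P m 2) = 0

namespace SixPointsAux

lemma cons_val_five {α : Type*} (a b c d e f : α) : ![a, b, c, d, e, f] 5 = f := rfl

variable {K : Type*} [Field K]

lemma lin2_aux {t1 t2 β γ : K} (h : t1 ≠ t2)
    (e1 : β * t1 + γ = 0) (e2 : β * t2 + γ = 0) : β = 0 ∧ γ = 0 := by
  have hb : β = 0 := by
    have h0 : (t1 - t2) * β = 0 := by linear_combination e1 - e2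
    rcases mul_eq_zero.1 h0 with h' | h'
    · exact absurd (sub_eq_zero.1 h') h
    · exact h'
  exact ⟨hb, by linear_combination e1 - t1 * hb⟩

lemma quad3_aux {t1 t2 t3 α β γ : K} (h12 : t1 ≠ t2) (h13 : t1 ≠ t3) (h23 : t2 ≠ t3)
    (e1 : α * t1 ^ 2 + β * t1 + γ = 0) (e2 : α * t2 ^ 2 + β * t2 + γ = 0)
    (e3 : α * t3 ^ 2 + β * t3 + γ = 0) : α = 0 ∧ β = 0 ∧ γ = 0 := by
  have f12 : α * (t1 + t2) + β = 0 := by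
    have h0 : (t1 - t2) * (α * (t1 + t2) + β) = 0 := by linear_combination e1 - e2
    rcases mul_eq_zero.1 h0 with h' | h'
    · exact absurd (sub_eq_zero.1 h') h12
    · exact h'
  have f13 : α * (t1 + t3) + β = 0 := by
    have h0 : (t1 - t3) * (α * (t1 + t3) + β) = 0 := by linear_combination e1 - e3
    rcases mul_eq_zero.1 h0 with h' | h'
    · exact absurd (sub_eq_zero.1 h') h13
    · exact h'
  have ha : α = 0 := by
    have h0 : (t2 - t3) * α = 0 := by linear_combination f12 - f13
    rcases mul_eq_zero.1 h0 with h' | h'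
    · exact absurd (sub_eq_zero.1 h') h23
    · exact h'
  have hb : β = 0 := by linear_combination f12 - (t1 + t2) * ha
  exact ⟨ha, hb, by linear_combination e1 - t1 ^ 2 * ha - t1 * hb⟩

lemma l1conic56 {t1 α β γ : K} (h5 : α = 0) (h6 : β = 0)
    (e1 : α * t1 ^ 2 + β * t1 + γ = 0) : (α, β, γ) = (0, 0, 0) := by
  have hg : γ = 0 := by linear_combination e1 - t1 ^ 2 * h5 - t1 * h6
  rw [h5, h6, hg]

lemma l2conic5 {t1 t2 α β γ : K} (h12 : t1 ≠ t2) (h5 : α = 0)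
    (e1 : α * t1 ^ 2 + β * t1 + γ = 0) (e2 : α * t2 ^ 2 + β * t2 + γ = 0) :
    (α, β, γ) = (0, 0, 0) := by
  have e1' : β * t1 + γ = 0 := by linear_combination e1 - t1 ^ 2 * h5
  have e2' : β * t2 + γ = 0 := by linear_combination e2 - t2 ^ 2 * h5
  obtain ⟨hb, hc⟩ := lin2_aux h12 e1' e2'
  rw [h5, hb, hc]

lemma l2conic6 {t1 t2 α β γ : K} (h12 : t1 ^ 2 ≠ t2 ^ 2) (h6 : β = 0)
    (e1 : α * t1 ^ 2 + β * t1 + γ = 0) (e2 : α * t2 ^ 2 + β * t2 + γ = 0) :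
    (α, β, γ) = (0, 0, 0) := by
  have e1' : α * t1 ^ 2 + γ = 0 := by linear_combination e1 - t1 * h6
  have e2' : α * t2 ^ 2 + γ = 0 := by linear_combination e2 - t2 * h6
  obtain ⟨ha, hc⟩ := lin2_aux h12 e1' e2'
  rw [ha, h6, hc]

lemma l3conic {t1 t2 t3 α β γ : K} (h12 : t1 ≠ t2) (h13 : t1 ≠ t3) (h23 : t2 ≠ t3)
    (e1 : α * t1 ^ 2 + β * t1 + γ = 0) (e2 : α * t2 ^ 2 + β * t2 + γ = 0)
    (e3 : α * t3 ^ 2 + β * t3 + γ = 0) : (α, β, γ) = (0, 0, 0) := by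
  obtain ⟨h1, h2, h3⟩ := quad3_aux h12 h13 h23 e1 e2 e3
  rw [h1, h2, h3]

lemma dA {ta tb c : K} (h : tb ≠ ta) (h1 : tb = c * ta) (h2 : (1 : K) = c) : False := by
  rw [← h2, one_mul] at h1; exact h h1

lemma dB {ta c : K} (h1 : (1 : K) = c * ta) (h2 : (0 : K) = c) : False := by
  rw [← h2, zero_mul] at h1; exact one_ne_zero h1

set_option maxHeartbeats 1000000 in
lemma general_position_aux {t0 t1 t2 t3 : K}
    (n01 : t0 ≠ t1) (n02 : t0 ≠ t2) (n03 : t0 ≠ t3)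
    (n12 : t1 ≠ t2) (n13 : t1 ≠ t3) (n23 : t2 ≠ t3)
    (s01 : t0 ^ 2 ≠ t1 ^ 2) (s02 : t0 ^ 2 ≠ t2 ^ 2) (s03 : t0 ^ 2 ≠ t3 ^ 2)
    (s12 : t1 ^ 2 ≠ t2 ^ 2) (s13 : t1 ^ 2 ≠ t3 ^ 2) (s23 : t2 ^ 2 ≠ t3 ^ 2) :
    InGeneralPosition6
      ![![t0 ^ 2, t0, 1], ![t1 ^ 2, t1, 1], ![t2 ^ 2, t2, 1], ![t3 ^ 2, t3, 1],
        ![1, 0, 0], ![0, 1, 0]] := by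
  have n10 := n01.symm; have n20 := n02.symm; have n30 := n03.symm
  have n21 := n12.symm; have n31 := n13.symm; have n32 := n23.symm
  have s10 := s01.symm; have s20 := s02.symm; have s30 := s03.symm
  have s21 := s12.symm; have s31 := s13.symm; have s32 := s23.symm
  refine ⟨?_, ?_, ?_⟩
  · -- the six points are pairwise distinct projective points
    rintro i j hij ⟨c, hc, h⟩
    have h0 := congrFun h 0
    have h1 := congrFun h 1
    have h2 := congrFun h 2
    clear h
    fin_cases i <;> fin_cases j <;>
      first
      | exact absurd rfl hij
      | ((simp only [Fin.reduceFinMk, Matrix.cons_val_zero, Matrix.cons_val_one,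
            Matrix.cons_val_two, Matrix.cons_val_three, Matrix.cons_val_four, cons_val_five,
            Matrix.head_cons, Matrix.tail_cons, Fin.isValue, Pi.smul_apply,
            smul_eq_mul, mul_one, mul_zero, zero_mul, zero_add, add_zero,
            one_ne_zero, zero_ne_one] at h0 h1 h2) <;>
          first
          | exact dA (by assumption) h1 h2
          | exact dB h0 h2
          | exact dB h1 h2)
  · -- no three of the six points are collinear
    rintro i j l hij hil hjl ⟨α, β, γ, hne, hv⟩
    have Ei := hv i (by simp)
    have Ej := hv j (by simp)
    have El := hv l (by simp)
    clear hv
    fin_cases i <;> fin_cases j <;> fin_cases l <;>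
      first
      | exact absurd rfl hij
      | exact absurd rfl hil
      | exact absurd rfl hjl
      | ((simp only [Fin.reduceFinMk, Matrix.cons_val_zero, Matrix.cons_val_one,
            Matrix.cons_val_two, Matrix.cons_val_three, Matrix.cons_val_four, cons_val_five,
            Matrix.head_cons, Matrix.tail_cons, Fin.isValue,
            mul_one, mul_zero, zero_mul, zero_add, add_zero] at Ei Ej El) <;>
          first
          | exact hne (l1conic56 Ei Ej El)
          | exact hne (l1conic56 Ei El Ej)
          | exact hne (l1conic56 Ej Ei El)
          | exact hne (l1conic56 Ej El Ei)
          | exact hne (l1conic56 El Ei Ej)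
          | exact hne (l1conic56 El Ej Ei)
          | (refine hne (l2conic5 ?_ Ei Ej El) <;> assumption)
          | (refine hne (l2conic5 ?_ Ej Ei El) <;> assumption)
          | (refine hne (l2conic5 ?_ El Ei Ej) <;> assumption)
          | (refine hne (l2conic6 ?_ Ei Ej El) <;> assumption)
          | (refine hne (l2conic6 ?_ Ej Ei El) <;> assumption)
          | (refine hne (l2conic6 ?_ El Ei Ej) <;> assumption)
          | (refine hne (l3conic ?_ ?_ ?_ Ei Ej El) <;> assumption))
  · -- the six points do not lie on a common conic
    rintro ⟨a, b, c, d, e, f, hne, hv⟩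
    have hA : a = 0 := by have h := hv 4; simpa using h
    have hB : b = 0 := by
      have h := hv 5
      simp only [cons_val_five, Matrix.cons_val_zero, Matrix.cons_val_one,
        Matrix.cons_val_two, Matrix.head_cons, Matrix.tail_cons, Fin.isValue,
        mul_one, mul_zero, zero_mul, zero_add, add_zero, zero_pow, one_pow,
        ne_eq, OfNat.ofNat_ne_zero, not_false_eq_true] at h
      exact h
    have key : ∀ u : K, a * (u ^ 2) ^ 2 + b * u ^ 2 + c * 1 ^ 2 + d * (u ^ 2 * u)
        + e * (u ^ 2 * 1) + f * (u * 1) = 0 →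
        d * u ^ 3 + e * u ^ 2 + f * u + c = 0 := by
      intro u h
      linear_combination h - (u ^ 2) ^ 2 * hA - u ^ 2 * hB
    have e0 : d * t0 ^ 3 + e * t0 ^ 2 + f * t0 + c = 0 := by
      have h := hv 0
      simp only [Matrix.cons_val_zero, Matrix.cons_val_one, Matrix.cons_val_two,
        Matrix.head_cons, Matrix.tail_cons, Fin.isValue] at h
      exact key t0 h
    have e1 : d * t1 ^ 3 + e * t1 ^ 2 + f * t1 + c = 0 := by
      have h := hv 1
      simp only [Matrix.cons_val_zero, Matrix.cons_val_one, Matrix.cons_val_two,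
        Matrix.head_cons, Matrix.tail_cons, Fin.isValue] at h
      exact key t1 h
    have e2 : d * t2 ^ 3 + e * t2 ^ 2 + f * t2 + c = 0 := by
      have h := hv 2
      simp only [Matrix.cons_val_zero, Matrix.cons_val_one, Matrix.cons_val_two,
        Matrix.head_cons, Matrix.tail_cons, Fin.isValue] at h
      exact key t2 h
    have e3 : d * t3 ^ 3 + e * t3 ^ 2 + f * t3 + c = 0 := by
      have h := hv 3
      simp only [Matrix.cons_val_zero, Matrix.cons_val_one, Matrix.cons_val_two,
        Matrix.cons_val_three, Matrix.head_cons, Matrix.tail_cons, Fin.isValue] at h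
      exact key t3 h
    have f12 : d * (t0 ^ 2 + t0 * t1 + t1 ^ 2) + e * (t0 + t1) + f = 0 := by
      have h0 : (t0 - t1) * (d * (t0 ^ 2 + t0 * t1 + t1 ^ 2) + e * (t0 + t1) + f) = 0 := by
        linear_combination e0 - e1
      rcases mul_eq_zero.1 h0 with h' | h'
      · exact absurd (sub_eq_zero.1 h') n01
      · exact h'
    have f13 : d * (t0 ^ 2 + t0 * t2 + t2 ^ 2) + e * (t0 + t2) + f = 0 := by
      have h0 : (t0 - t2) * (d * (t0 ^ 2 + t0 * t2 + t2 ^ 2) + e * (t0 + t2) + f) = 0 := by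
        linear_combination e0 - e2
      rcases mul_eq_zero.1 h0 with h' | h'
      · exact absurd (sub_eq_zero.1 h') n02
      · exact h'
    have f14 : d * (t0 ^ 2 + t0 * t3 + t3 ^ 2) + e * (t0 + t3) + f = 0 := by
      have h0 : (t0 - t3) * (d * (t0 ^ 2 + t0 * t3 + t3 ^ 2) + e * (t0 + t3) + f) = 0 := by
        linear_combination e0 - e3
      rcases mul_eq_zero.1 h0 with h' | h'
      · exact absurd (sub_eq_zero.1 h') n03
      · exact h'
    have g3 : d * (t0 + t1 + t2) + e = 0 := by
      have h0 : (t1 - t2) * (d * (t0 + t1 + t2) + e) = 0 := by linear_combination f12 - f13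
      rcases mul_eq_zero.1 h0 with h' | h'
      · exact absurd (sub_eq_zero.1 h') n12
      · exact h'
    have g4 : d * (t0 + t1 + t3) + e = 0 := by
      have h0 : (t1 - t3) * (d * (t0 + t1 + t3) + e) = 0 := by linear_combination f12 - f14
      rcases mul_eq_zero.1 h0 with h' | h'
      · exact absurd (sub_eq_zero.1 h') n13
      · exact h'
    have hD : d = 0 := by
      have h0 : (t2 - t3) * d = 0 := by linear_combination g3 - g4
      rcases mul_eq_zero.1 h0 with h' | h'
      · exact absurd (sub_eq_zero.1 h') n23
      · exact h'
    have hE : e = 0 := by linear_combination g3 - (t0 + t1 + t2) * hD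
    have hF : f = 0 := by
      linear_combination f12 - (t0 ^ 2 + t0 * t1 + t1 ^ 2) * hD - (t0 + t1) * hE
    have hC : c = 0 := by linear_combination e0 - t0 ^ 3 * hD - t0 ^ 2 * hE - t0 * hF
    exact hne (by rw [hA, hB, hC, hD, hE, hF])

end SixPointsAux

/-- Let `r ≥ 1`, let `F` be a field, and let `ζ ∈ F` be a primitive `5^(r+1)`-th root of unity.
Let `d` be an integer with `d ≡ 2 (mod 5)` and `d² ≡ −1 (mod 5^(r+1))`.  Then the six points of
`ℙ²(F)` with coordinate triples `(ζ²,ζ,1), (ζ^(2d),ζ^d,1), (ζ^(−2),ζ^(−1),1),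
(ζ^(−2d),ζ^(−d),1), (1,0,0), (0,1,0)` are in general position. -/
theorem sixPoints_generalPosition (r : ℕ) (hr : 1 ≤ r) {F : Type*} [Field F] (ζ : F)
    (hζ : IsPrimitiveRoot ζ (5 ^ (r + 1))) (d : ℤ) (hd1 : d ≡ 2 [ZMOD 5])
    (hd2 : d ^ 2 ≡ -1 [ZMOD (5 ^ (r + 1))]) :
    InGeneralPosition6
      ![![ζ ^ 2, ζ, 1], ![ζ ^ (2 * d), ζ ^ d, 1], ![ζ ^ (-2 : ℤ), ζ ^ (-1 : ℤ), 1],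
        ![ζ ^ (-(2 * d)), ζ ^ (-d), 1], ![1, 0, 0], ![0, 1, 0]] := by
  have hz : ζ ≠ 0 := hζ.ne_zero (pow_ne_zero _ (by norm_num))
  have h5n : (5 : ℤ) ∣ ((5 ^ (r + 1) : ℕ) : ℤ) := by
    push_cast
    exact dvd_pow_self 5 (Nat.succ_ne_zero r)
  have hd5 : d % 5 = 2 % 5 := hd1
  have hzne : ∀ a b : ℤ, ¬(5 : ℤ) ∣ (a - b) → ζ ^ a ≠ ζ ^ b := by
    intro a b h5 heq
    apply h5
    refine dvd_trans h5n ?_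
    rw [← hζ.zpow_eq_one_iff_dvd]
    rw [zpow_sub₀ hz, heq, div_self (zpow_ne_zero _ hz)]
  have pow2 : ∀ c : F, c ^ (2 : ℕ) = c ^ (2 : ℤ) := fun c => by
    exact_mod_cast (zpow_natCast c 2).symm
  have hzsq : ∀ a b : ℤ, ¬(5 : ℤ) ∣ (a * 2 - b * 2) → (ζ ^ a) ^ (2 : ℕ) ≠ (ζ ^ b) ^ (2 : ℕ) := by
    intro a b h5 heq
    apply hzne (a * 2) (b * 2) h5
    rw [zpow_mul, zpow_mul, ← pow2, ← pow2]
    exact heq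
  have hM : ![![ζ ^ 2, ζ, 1], ![ζ ^ (2 * d), ζ ^ d, 1], ![ζ ^ (-2 : ℤ), ζ ^ (-1 : ℤ), 1],
        ![ζ ^ (-(2 * d)), ζ ^ (-d), 1], ![(1 : F), 0, 0], ![0, 1, 0]]
      = ![![(ζ ^ (1 : ℤ)) ^ 2, ζ ^ (1 : ℤ), 1], ![(ζ ^ d) ^ 2, ζ ^ d, 1],
          ![(ζ ^ (-1 : ℤ)) ^ 2, ζ ^ (-1 : ℤ), 1], ![(ζ ^ (-d)) ^ 2, ζ ^ (-d), 1],
          ![1, 0, 0], ![0, 1, 0]] := by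
    funext i j
    fin_cases i <;> fin_cases j <;>
      simp <;> rw [← zpow_natCast, ← zpow_mul, mul_comm] <;> simp
  rw [hM]
  exact SixPointsAux.general_position_aux
    (hzne 1 d (by omega)) (hzne 1 (-1) (by omega)) (hzne 1 (-d) (by omega))
    (hzne d (-1) (by omega)) (hzne d (-d) (by omega)) (hzne (-1) (-d) (by omega))
    (hzsq 1 d (by omega)) (hzsq 1 (-1) (by omega)) (hzsq 1 (-d) (by omega))
    (hzsq d (-1) (by omega)) (hzsq d (-d) (by omega)) (hzsq (-1) (-d) (by omega))
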